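/- For every integer n ≥ 2 there exists a linear map Ψ : ℝ^n → ℝ^n with Ψ(L_n) ⊆ L_n such that Ψ^n maps L_n \ {0} into the interior of L_n but Ψ^{n-1} does not map L_n \ {0} into the interior of L_n (i.e., Ψ is primitive with primitivity index exactly n). -/

import Mathlib

open Metric Set

/-- The `(n+1)`-dimensional Lorentz cone
`L_{n+1} = {x ∈ ℝ^{n+1} : x_{n+1} ≥ sqrt (x_1^2 + ⋯ + x_n^2)}`. -/
def lorentzCone (n : ℕ) : Set (EuclideanSpace ℝ (Fin (n + 1))) :=
  {x | Real.sqrt (∑ i : Fin n, x (Fin.castSucc i) ^ 2) ≤ x (Fin.last n)}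

namespace LorentzPrim

noncomputable def r2 : ℝ := (Real.sqrt 2)⁻¹

lemma sqrt2_pos : (0:ℝ) < Real.sqrt 2 := Real.sqrt_pos.2 (by norm_num)
lemma sqrt2_sq : (Real.sqrt 2)^2 = 2 := Real.sq_sqrt (by norm_num)
lemma r2_pos : 0 < r2 := inv_pos.2 sqrt2_pos
lemma r2_sq : r2^2 = 1/2 := by
  rw [r2, inv_pow, sqrt2_sq]; norm_num
lemma r2_mul_sqrt2 : r2 * Real.sqrt 2 = 1 := inv_mul_cancel₀ (ne_of_gt sqrt2_pos)

variable (n : ℕ)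

noncomputable def sc : ℝ := r2 ^ (n+2)
noncomputable def cc : ℝ := Real.sqrt (1/2 - sc n ^ 2)
noncomputable def dl : ℝ := sc n / cc n

lemma sc_pos : 0 < sc n := pow_pos r2_pos _
lemma sc_sq : sc n ^ 2 = (1/2)^(n+2) := by
  rw [sc, ← pow_mul, mul_comm, pow_mul, r2_sq]
lemma sc_sq_lt : sc n ^ 2 < 1/2 := by
  rw [sc_sq]
  calc (1/2:ℝ)^(n+2) ≤ (1/2)^2 :=
        pow_le_pow_of_le_one (by norm_num) (by norm_num) (by omega)
    _ < 1/2 := by norm_num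

lemma cc_sq : cc n ^ 2 = 1/2 - sc n ^ 2 :=
  Real.sq_sqrt (by linarith [sc_sq_lt n])
lemma cc_pos : 0 < cc n := Real.sqrt_pos.2 (by linarith [sc_sq_lt n])
lemma sc_eq : sc n = cc n * dl n := by
  rw [dl, mul_comm]
  exact (div_mul_cancel₀ (sc n) (ne_of_gt (cc_pos n))).symm
lemma dl_pos : 0 < dl n := div_pos (sc_pos n) (cc_pos n)
lemma half_eq : cc n ^ 2 * (1 + dl n ^ 2) = 1/2 := by
  have h1 := cc_sq n
  have h2 := sc_eq n
  linear_combination h1 - (sc n + cc n * dl n) * h2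
lemma dl_sq : dl n ^ 2 * (2^(n+1) - 1) = 1 := by
  have hpow : ((1:ℝ)/2)^(n+1) * 2^(n+1) = 1 := by
    rw [← mul_pow]; norm_num
  have h1 : sc n ^ 2 * ((2:ℝ)^(n+1) - 1) = cc n ^ 2 := by
    rw [sc_sq, cc_sq, sc_sq, pow_succ (1/2:ℝ) (n+1)]
    nlinarith [hpow]
  have hc := cc_pos n
  rw [dl, div_pow, div_mul_eq_mul_div, h1]
  field_simp

/-- spatial index `n` -/
def ia : Fin (n+2) := ⟨n, by omega⟩
/-- time index `n+1` -/
def iT : Fin (n+2) := Fin.last (n+1)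

lemma ia_val : ((ia n : Fin (n+2)) : ℕ) = n := rfl
lemma iT_val : ((iT n : Fin (n+2)) : ℕ) = n+1 := rfl

noncomputable def psiFun (x : EuclideanSpace ℝ (Fin (n+2))) : EuclideanSpace ℝ (Fin (n+2)) :=
  WithLp.toLp 2 fun i => if (i:ℕ) = 0 then -(sc n * x (ia n) + cc n * x (iT n))
    else if h : (i:ℕ) < n+1 then r2 * x ⟨(i:ℕ) - 1, by omega⟩
    else x (iT n)

noncomputable def Psi : Module.End ℝ (EuclideanSpace ℝ (Fin (n+2))) where
  toFun := psiFun n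
  map_add' x y := by
    ext i
    show psiFun n (x + y) i = psiFun n x i + psiFun n y i
    have ha : ∀ (a b : EuclideanSpace ℝ (Fin (n+2))) (j : Fin (n+2)),
        (a + b) j = a j + b j := fun _ _ _ => rfl
    simp only [psiFun, PiLp.toLp_apply]
    split_ifs <;> simp only [ha] <;> ring
  map_smul' c x := by
    ext i
    show psiFun n (c • x) i = c * psiFun n x i
    have hs : ∀ (a : EuclideanSpace ℝ (Fin (n+2))) (j : Fin (n+2)),
        (c • a) j = c * a j := fun _ _ => rfl
    simp only [psiFun, PiLp.toLp_apply]
    split_ifs <;> simp only [hs] <;> ring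

lemma psi_zero (x : EuclideanSpace ℝ (Fin (n+2))) (i : Fin (n+2)) (h : (i:ℕ) = 0) :
    Psi n x i = -(sc n * x (ia n) + cc n * x (iT n)) := by
  show psiFun n x i = _
  simp only [psiFun, PiLp.toLp_apply, if_pos h]

lemma psi_mid (x : EuclideanSpace ℝ (Fin (n+2))) (i : Fin (n+2)) (h1 : 1 ≤ (i:ℕ)) (h2 : (i:ℕ) ≤ n) :
    Psi n x i = r2 * x ⟨(i:ℕ) - 1, by omega⟩ := by
  show psiFun n x i = _
  simp only [psiFun, PiLp.toLp_apply]
  rw [if_neg (by omega), dif_pos (by omega)]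

lemma psi_T (x : EuclideanSpace ℝ (Fin (n+2))) : Psi n x (iT n) = x (iT n) := by
  show psiFun n x (iT n) = _
  simp only [psiFun, PiLp.toLp_apply, iT_val]
  simp

lemma pow_succ_apply (k : ℕ) (x : EuclideanSpace ℝ (Fin (n+2))) :
    (Psi n ^ (k+1)) x = (Psi n ^ k) (Psi n x) := by
  rw [pow_succ, Module.End.mul_apply]

lemma pow_succ_apply' (k : ℕ) (x : EuclideanSpace ℝ (Fin (n+2))) :
    (Psi n ^ (k+1)) x = Psi n ((Psi n ^ k) x) := by
  rw [pow_succ', Module.End.mul_apply]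

lemma pow_T (k : ℕ) (x : EuclideanSpace ℝ (Fin (n+2))) :
    (Psi n ^ k) x (iT n) = x (iT n) := by
  induction k generalizing x with
  | zero => simp
  | succ k ih => rw [pow_succ_apply, ih, psi_T]

lemma pow_a (x : EuclideanSpace ℝ (Fin (n+2))) :
    ∀ j, j ≤ n → (Psi n ^ j) x (ia n) = r2^j * x ⟨n - j, by omega⟩ := by
  intro j
  induction j generalizing x with
  | zero =>
    intro _
    have : (⟨n - 0, by omega⟩ : Fin (n+2)) = ia n := by
      simp only [ia, Nat.sub_zero]
    rw [this]
    simp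
  | succ j ih =>
    intro hj
    rw [pow_succ_apply, ih (Psi n x) (by omega)]
    rw [psi_mid n x ⟨n - j, by omega⟩ (by show 1 ≤ n - j; omega) (by show n - j ≤ n; omega)]
    rw [show (⟨((⟨n - j, by omega⟩ : Fin (n+2)) : ℕ) - 1, by omega⟩ : Fin (n+2))
        = ⟨n - (j+1), by omega⟩ from Fin.ext (show n - j - 1 = n - (j+1) by omega)]
    ring

lemma pow_n1_a (x : EuclideanSpace ℝ (Fin (n+2))) :
    (Psi n ^ (n+1)) x (ia n) = -(r2^n * (sc n * x (ia n) + cc n * x (iT n))) := by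
  rw [pow_succ_apply, pow_a n (Psi n x) n le_rfl]
  rw [psi_zero n x ⟨n - n, by omega⟩ (by show n - n = 0; omega)]
  ring

noncomputable def Ssum (x : EuclideanSpace ℝ (Fin (n+2))) : ℝ :=
  ∑ i : Fin (n+1), x (Fin.castSucc i)^2

noncomputable def Nq (x : EuclideanSpace ℝ (Fin (n+2))) : ℝ := x (iT n)^2 - Ssum n x

lemma Ssum_nonneg (x : EuclideanSpace ℝ (Fin (n+2))) : 0 ≤ Ssum n x :=
  Finset.sum_nonneg (fun _ _ => sq_nonneg _)

lemma mem_iff (x : EuclideanSpace ℝ (Fin (n+2))) :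
    x ∈ lorentzCone (n+1) ↔ Real.sqrt (Ssum n x) ≤ x (iT n) := Iff.rfl

lemma mem_consequences {x : EuclideanSpace ℝ (Fin (n+2))} (hx : x ∈ lorentzCone (n+1)) :
    0 ≤ Nq n x ∧ 0 ≤ x (iT n) := by
  rw [mem_iff] at hx
  have h0 : 0 ≤ x (iT n) := le_trans (Real.sqrt_nonneg _) hx
  have h1 : Real.sqrt (Ssum n x) ^ 2 ≤ x (iT n) ^ 2 :=
    pow_le_pow_left₀ (Real.sqrt_nonneg _) hx 2
  rw [Real.sq_sqrt (Ssum_nonneg n x)] at h1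
  exact ⟨by simp only [Nq]; linarith, h0⟩

/-- The fundamental identity. -/
lemma key (x : EuclideanSpace ℝ (Fin (n+2))) :
    Nq n (Psi n x) = Nq n x / 2 + cc n ^ 2 * (x (ia n) - dl n * x (iT n))^2 := by
  have hlast : Fin.castSucc (Fin.last n) = ia n := Fin.ext (by simp [ia])
  have hsplitS : Ssum n x = (∑ i : Fin n, x (Fin.castSucc (Fin.castSucc i))^2) + x (ia n)^2 := by
    rw [Ssum, Fin.sum_univ_castSucc, hlast]
  have hsplit1 : Ssum n (Psi n x)
      = (sc n * x (ia n) + cc n * x (iT n))^2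
        + (1/2) * (∑ i : Fin n, x (Fin.castSucc (Fin.castSucc i))^2) := by
    rw [Ssum, Fin.sum_univ_succ]
    congr 1
    · rw [psi_zero n x (Fin.castSucc 0) (by simp)]
      ring
    · rw [Finset.mul_sum]
      apply Finset.sum_congr rfl
      intro i _
      rw [psi_mid n x (Fin.castSucc i.succ) (by simp)
        (by have h := i.is_lt; simp only [Fin.coe_castSucc, Fin.val_succ]; omega)]
      have hidx : (⟨((Fin.castSucc i.succ : Fin (n+2)) : ℕ) - 1, by omega⟩ : Fin (n+2))
          = Fin.castSucc (Fin.castSucc i) := Fin.ext (by simp)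
      rw [hidx, mul_pow, r2_sq]
  have hT := psi_T n x
  have hhalf := half_eq n
  have hseq := sc_eq n
  simp only [Nq, hT, hsplit1]
  rw [hseq]
  linear_combination (1/2) * hsplitS - (x (ia n)^2 + x (iT n)^2) * hhalf

lemma mem_cone {x : EuclideanSpace ℝ (Fin (n+2))} (hx : x ∈ lorentzCone (n+1)) :
    Psi n x ∈ lorentzCone (n+1) := by
  obtain ⟨hN, hT⟩ := mem_consequences n hx
  rw [mem_iff, psi_T]
  have hkey := key n x
  have hsq : 0 ≤ cc n ^ 2 * (x (ia n) - dl n * x (iT n))^2 :=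
    mul_nonneg (sq_nonneg _) (sq_nonneg _)
  have h1 : Ssum n (Psi n x) ≤ x (iT n)^2 := by
    have : Nq n (Psi n x) = (Psi n x) (iT n) ^2 - Ssum n (Psi n x) := rfl
    rw [psi_T] at this
    nlinarith [hkey, hN, hsq, this]
  calc Real.sqrt (Ssum n (Psi n x)) ≤ Real.sqrt (x (iT n)^2) := Real.sqrt_le_sqrt h1
    _ = x (iT n) := Real.sqrt_sq hT

lemma pow_mem {x : EuclideanSpace ℝ (Fin (n+2))} (hx : x ∈ lorentzCone (n+1)) (k : ℕ) :
    (Psi n ^ k) x ∈ lorentzCone (n+1) := by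
  induction k with
  | zero => simpa using hx
  | succ k ih => rw [pow_succ_apply']; exact mem_cone n ih

lemma descend {x : EuclideanSpace ℝ (Fin (n+2))} (hx : x ∈ lorentzCone (n+1)) (k : ℕ)
    (h : Nq n ((Psi n ^ (k+1)) x) = 0) :
    Nq n ((Psi n ^ k) x) = 0 ∧
      (Psi n ^ k) x (ia n) = dl n * (Psi n ^ k) x (iT n) := by
  set y := (Psi n ^ k) x with hy
  have hymem : y ∈ lorentzCone (n+1) := pow_mem n hx k
  have hNy : 0 ≤ Nq n y := (mem_consequences n hymem).1
  have hkey : Nq n (Psi n y) = Nq n y / 2 + cc n ^2 * (y (ia n) - dl n * y (iT n))^2 := key n y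
  rw [pow_succ_apply'] at h
  rw [← hy] at h
  rw [h] at hkey
  have hc2 : 0 < cc n ^ 2 := pow_pos (cc_pos n) 2
  have hsq : 0 ≤ (y (ia n) - dl n * y (iT n))^2 := sq_nonneg _
  constructor
  · nlinarith [hkey, hNy, hc2, hsq, mul_nonneg (le_of_lt hc2) hsq]
  · have hM2 : (y (ia n) - dl n * y (iT n))^2 = 0 := by
      nlinarith [hkey, hNy, hc2, hsq, mul_nonneg (le_of_lt hc2) hsq]
    have := pow_eq_zero_iff (n := 2) (by norm_num) |>.mp hM2
    linarith [this]

lemma openSubset :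
    {y : EuclideanSpace ℝ (Fin (n+2)) | Ssum n y < y (iT n)^2 ∧ 0 < y (iT n)} ⊆
      interior (lorentzCone (n+1)) := by
  apply interior_maximal
  · intro y hy
    obtain ⟨h1, h2⟩ := hy
    rw [mem_iff]
    calc Real.sqrt (Ssum n y) ≤ Real.sqrt (y (iT n)^2) := Real.sqrt_le_sqrt (le_of_lt h1)
      _ = y (iT n) := Real.sqrt_sq (le_of_lt h2)
  · have hconts : Continuous fun y : EuclideanSpace ℝ (Fin (n+2)) => Ssum n y := by
      unfold Ssum
      exact continuous_finset_sum _ (fun i _ => (PiLp.continuous_apply (p := 2) (β := fun _ => ℝ) _).pow 2)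
    have hT : Continuous fun y : EuclideanSpace ℝ (Fin (n+2)) => y (iT n) := PiLp.continuous_apply (p := 2) (β := fun _ => ℝ) _
    exact (isOpen_lt hconts (hT.pow 2)).inter (isOpen_lt continuous_const hT)

lemma t_pos {x : EuclideanSpace ℝ (Fin (n+2))} (hx : x ∈ lorentzCone (n+1)) (hx0 : x ≠ 0) :
    0 < x (iT n) := by
  obtain ⟨hN, hT⟩ := mem_consequences n hx
  rcases lt_or_eq_of_le hT with h | h
  · exact h
  · exfalso
    apply hx0
    have hdef : Nq n x = x (iT n)^2 - Ssum n x := rfl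
    have hS : Ssum n x ≤ 0 := by nlinarith [hN, hdef, h]
    have hS0 : Ssum n x = 0 := le_antisymm hS (Ssum_nonneg n x)
    have hzero : ∀ i : Fin (n+1), x (Fin.castSucc i) = 0 := by
      intro i
      have h2 := (Finset.sum_eq_zero_iff_of_nonneg
        (fun j _ => sq_nonneg (x (Fin.castSucc j)))).mp hS0 i (Finset.mem_univ i)
      exact pow_eq_zero_iff (two_ne_zero) |>.mp h2
    ext i
    induction i using Fin.lastCases with
    | last => exact (show x (iT n) = 0 from h.symm)
    | cast j => exact hzero j

lemma strict_main {x : EuclideanSpace ℝ (Fin (n+2))} (hx : x ∈ lorentzCone (n+1)) (hx0 : x ≠ 0) :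
    (Psi n ^ (n+2)) x ∈ interior (lorentzCone (n+1)) := by
  have ht : 0 < x (iT n) := t_pos n hx hx0
  refine openSubset n ⟨?_, ?_⟩
  · by_contra hcon
    push_neg at hcon
    have h1 := (mem_consequences n (pow_mem n hx (n+2))).1
    have hdef : Nq n ((Psi n ^ (n+2)) x)
        = ((Psi n ^ (n+2)) x) (iT n)^2 - Ssum n ((Psi n ^ (n+2)) x) := rfl
    have hNn2 : Nq n ((Psi n ^ (n+2)) x) = 0 := by linarith
    have hchain : ∀ i, i ≤ n+2 → Nq n ((Psi n ^ (n+2-i)) x) = 0 := by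
      intro i
      induction i with
      | zero => intro _; simpa using hNn2
      | succ i ih =>
        intro hi
        have h' := ih (by omega)
        rw [show n+2-i = (n+2-(i+1)) + 1 from by omega] at h'
        exact (descend n hx _ h').1
    have hM0 : x (ia n) = dl n * x (iT n) := by
      have h2 := hchain (n+1) (by omega)
      rw [show n+2-(n+1) = 0 + 1 from by omega] at h2
      have h3 := (descend n hx 0 h2).2
      simpa using h3
    have hMn1 := (descend n hx (n+1) hNn2).2
    rw [pow_n1_a, pow_T, hM0] at hMn1
    have hpos : 0 < sc n * (dl n * x (iT n)) + cc n * x (iT n) := by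
      have := mul_pos (sc_pos n) (mul_pos (dl_pos n) ht)
      have := mul_pos (cc_pos n) ht
      linarith
    have hr2n : 0 < r2^n := pow_pos r2_pos n
    have := mul_pos hr2n hpos
    have := mul_pos (dl_pos n) ht
    linarith
  · rw [pow_T]; exact ht

noncomputable def x0 : EuclideanSpace ℝ (Fin (n+2)) :=
  WithLp.toLp 2 fun i => if (i:ℕ) = n+1 then 1 else dl n * (Real.sqrt 2)^(n - (i:ℕ))

lemma x0_T : x0 n (iT n) = 1 := by
  show (if ((iT n : Fin (n+2)):ℕ) = n+1 then (1:ℝ)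
    else dl n * (Real.sqrt 2)^(n - ((iT n : Fin (n+2)):ℕ))) = 1
  rw [if_pos (iT_val n)]

lemma Ssum_x0 : Ssum n (x0 n) = 1 := by
  have h1 : ∀ i : Fin (n+1), x0 n (Fin.castSucc i)^2 = dl n^2 * 2^(n - (i:ℕ)) := by
    intro i
    have hlt := i.is_lt
    have hv : x0 n (Fin.castSucc i) = dl n * (Real.sqrt 2)^(n - (i:ℕ)) := by
      show (if ((Fin.castSucc i : Fin (n+2)):ℕ) = n+1 then (1:ℝ)
        else dl n * (Real.sqrt 2)^(n - ((Fin.castSucc i : Fin (n+2)):ℕ))) = _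
      rw [if_neg (by simp only [Fin.coe_castSucc]; omega)]
      simp only [Fin.coe_castSucc]
    have hp : ((Real.sqrt 2)^(n - (i:ℕ)))^2 = 2^(n - (i:ℕ)) := by
      rw [← pow_mul, mul_comm, pow_mul, sqrt2_sq]
    rw [hv, mul_pow, hp]
  rw [Ssum, Finset.sum_congr rfl (fun i _ => h1 i), ← Finset.mul_sum]
  have h2 : ∑ i : Fin (n+1), (2:ℝ)^(n - (i:ℕ)) = 2^(n+1) - 1 := by
    rw [Fin.sum_univ_eq_sum_range (fun k => (2:ℝ)^(n - k)) (n+1)]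
    have h3 := Finset.sum_range_reflect (fun j => (2:ℝ)^j) (n+1)
    simp only [Nat.add_sub_cancel] at h3
    rw [h3, geom_sum_eq (by norm_num : (2:ℝ) ≠ 1)]
    norm_num
  rw [h2, dl_sq]

lemma x0_mem : x0 n ∈ lorentzCone (n+1) := by
  rw [mem_iff, Ssum_x0, x0_T, Real.sqrt_one]

lemma x0_ne : x0 n ≠ 0 := by
  intro h
  have h1 : x0 n (iT n) = 0 := by rw [h]; rfl
  rw [x0_T] at h1
  norm_num at h1

lemma M_x0 (j : ℕ) (hj : j ≤ n) :
    (Psi n ^ j) (x0 n) (ia n) = dl n * (Psi n ^ j) (x0 n) (iT n) := by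
  rw [pow_a n (x0 n) j hj, pow_T, x0_T, mul_one]
  have hval : x0 n (⟨n - j, by omega⟩ : Fin (n+2)) = dl n * (Real.sqrt 2)^(n - (n - j)) := by
    show (if (n - j) = n+1 then (1:ℝ) else dl n * (Real.sqrt 2)^(n - (n-j))) = _
    rw [if_neg (by omega)]
  rw [hval, show n - (n - j) = j from by omega]
  have hone : r2^j * (Real.sqrt 2)^j = 1 := by rw [← mul_pow, r2_mul_sqrt2, one_pow]
  linear_combination dl n * hone

lemma Nq_x0 : ∀ j, j ≤ n+1 → Nq n ((Psi n ^ j) (x0 n)) = 0 := by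
  intro j
  induction j with
  | zero =>
    intro _
    have h0 : Nq n (x0 n) = 0 := by
      have hdef : Nq n (x0 n) = x0 n (iT n)^2 - Ssum n (x0 n) := rfl
      rw [hdef, Ssum_x0, x0_T]
      norm_num
    simpa using h0
  | succ j ih =>
    intro hj
    rw [pow_succ_apply', key n ((Psi n ^ j) (x0 n)), ih (by omega)]
    rw [show (Psi n ^ j) (x0 n) (ia n) - dl n * (Psi n ^ j) (x0 n) (iT n) = 0 from by
      rw [M_x0 n j (by omega)]; ring]
    ring

lemma norm_single' (i : Fin (n+2)) (a : ℝ) : ‖EuclideanSpace.single i a‖ = |a| := by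
  rw [EuclideanSpace.norm_eq]
  have h1 : ∀ j : Fin (n+2), ‖EuclideanSpace.single i a j‖^2 = if j = i then a^2 else 0 := by
    intro j
    rw [EuclideanSpace.single_apply]
    split_ifs <;> simp [Real.norm_eq_abs, sq_abs]
  rw [Finset.sum_congr rfl (fun j _ => h1 j)]
  rw [Finset.sum_ite_eq' Finset.univ i (fun _ => a^2)]
  simp [Real.sqrt_sq_eq_abs]

lemma witness_not_interior :
    (Psi n ^ (n+1)) (x0 n) ∉ interior (lorentzCone (n+1)) := by
  set z := (Psi n ^ (n+1)) (x0 n) with hz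
  have hNz : Nq n z = 0 := Nq_x0 n (n+1) le_rfl
  have hzT : z (iT n) = 1 := by rw [hz, pow_T, x0_T]
  have hSz : Ssum n z = 1 := by
    have hdef : Nq n z = z (iT n)^2 - Ssum n z := rfl
    rw [hzT] at hdef
    nlinarith [hNz, hdef]
  intro hmem
  obtain ⟨ε, hε, hball⟩ := Metric.mem_nhds_iff.mp (mem_interior_iff_mem_nhds.mp hmem)
  set z' := z - EuclideanSpace.single (iT n) (ε/2) with hz'
  have hz'mem : z' ∈ Metric.ball z ε := by
    rw [Metric.mem_ball, dist_eq_norm]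
    have hd : z' - z = -(EuclideanSpace.single (iT n) (ε/2)) := by rw [hz']; abel
    rw [hd, norm_neg, norm_single', abs_of_pos (by linarith)]
    linarith
  have hz'C := hball hz'mem
  rw [mem_iff] at hz'C
  have h1 : Ssum n z' = 1 := by
    rw [← hSz, Ssum, Ssum]
    apply Finset.sum_congr rfl
    intro i _
    have hcoord : z' (Fin.castSucc i) = z (Fin.castSucc i) := by
      show z (Fin.castSucc i) - EuclideanSpace.single (iT n) (ε/2) (Fin.castSucc i) = _
      rw [EuclideanSpace.single_apply, if_neg, sub_zero]
      intro hcontr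
      have h2 := congrArg Fin.val hcontr
      simp only [Fin.coe_castSucc, iT, Fin.val_last] at h2
      have := i.is_lt
      omega
    rw [hcoord]
  have h2 : z' (iT n) = 1 - ε/2 := by
    show z (iT n) - EuclideanSpace.single (iT n) (ε/2) (iT n) = _
    rw [EuclideanSpace.single_apply, if_pos rfl, hzT]
  rw [h1, h2, Real.sqrt_one] at hz'C
  linarith

end LorentzPrim


/-- For every dimension `n + 2 ≥ 2` there is a primitive map of the
`(n+2)`-dimensional Lorentz cone with primitivity index exactly `n + 2`:
`Ψ^(n+2)` is strictly positive but `Ψ^(n+1)` is not. -/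
theorem exists_lorentzCone_primitive_index_eq_dim (n : ℕ) :
    ∃ Ψ : Module.End ℝ (EuclideanSpace ℝ (Fin (n + 2))),
      (∀ x ∈ lorentzCone (n + 1), Ψ x ∈ lorentzCone (n + 1)) ∧
      (∀ x ∈ lorentzCone (n + 1), x ≠ 0 →
        (Ψ ^ (n + 2)) x ∈ interior (lorentzCone (n + 1))) ∧
      ¬ (∀ x ∈ lorentzCone (n + 1), x ≠ 0 →
        (Ψ ^ (n + 1)) x ∈ interior (lorentzCone (n + 1))) := by
  refine ⟨LorentzPrim.Psi n, ?_, ?_, ?_⟩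
  · intro x hx
    exact LorentzPrim.mem_cone n hx
  · intro x hx hx0
    exact LorentzPrim.strict_main n hx hx0
  · intro hall
    exact LorentzPrim.witness_not_interior n
      (hall (LorentzPrim.x0 n) (LorentzPrim.x0_mem n) (LorentzPrim.x0_ne n))
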